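/- With the setup of the previous statement, for k ≤ n/2 the variance of S_n(k) − s_{k,n}(S_n) equals k σ₁² ((σ₁²+σ₂²)n − 2σ₁² k)/((σ₁²+σ₂²)n), and for n/2 ≤ k ≤ n it equals (n−k) σ₂² ((σ₁²+σ₂²)n − 2σ₂²(n−k))/((σ₁²+σ₂²)n). -/

import Mathlib

open MeasureTheory ProbabilityTheory

open Real Set
open scoped NNReal

lemma integral_sq_exp_neg_mul_sq' {b : ℝ} (hb : 0 < b) :
    ∫ x : ℝ, x ^ 2 * Real.exp (-b * x ^ 2) = Real.sqrt π / 2 * b ^ (-(3:ℝ)/2) := by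
  have h1 : ∫ x : ℝ, x ^ 2 * Real.exp (-b * x ^ 2)
      = 2 * ∫ x in Ioi (0:ℝ), x ^ 2 * Real.exp (-b * x ^ 2) := by
    rw [← integral_comp_abs (f := fun x => x ^ 2 * Real.exp (-b * x ^ 2))]
    congr 1; ext x; rw [sq_abs]
  have h2 := integral_rpow_mul_exp_neg_mul_rpow (p := 2) (q := 2) two_pos (by norm_num) hb
  simp_rw [show ((2:ℝ)) = ((2:ℕ):ℝ) by norm_num, Real.rpow_natCast] at h2
  rw [h1, h2]
  have hG32 : Real.Gamma (3/2) = Real.sqrt π / 2 := by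
    rw [show (3:ℝ)/2 = 1/2 + 1 by norm_num, Real.Gamma_add_one (by norm_num),
      Real.Gamma_one_half_eq]
    ring
  norm_num
  rw [hG32]
  ring

lemma integrable_sq_exp_neg_mul_sq' {b : ℝ} (hb : 0 < b) :
    Integrable (fun x : ℝ => x ^ 2 * Real.exp (-b * x ^ 2)) := by
  have h := integrable_rpow_mul_exp_neg_mul_sq hb (s := 2) (by norm_num)
  simp_rw [show ((2:ℝ)) = ((2:ℕ):ℝ) by norm_num, Real.rpow_natCast] at h
  exact h

lemma gaussianPDF_smul_sq (v : ℝ≥0) (hv : v ≠ 0) :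
    ∀ x : ℝ, (gaussianPDFReal 0 v x).toNNReal • (x ^ 2)
      = (Real.sqrt (2 * π * v))⁻¹ * (x ^ 2 * Real.exp (-(2 * (v:ℝ))⁻¹ * x ^ 2)) := by
  intro x
  rw [NNReal.smul_def, smul_eq_mul, Real.coe_toNNReal _ (gaussianPDFReal_nonneg 0 v x),
    gaussianPDFReal]
  have : -(x - 0) ^ 2 / (2 * (v:ℝ)) = -(2 * (v:ℝ))⁻¹ * x ^ 2 := by
    field_simp
    ring
  rw [this]
  ring

lemma gaussianReal_eq_withDensity (v : ℝ≥0) (hv : v ≠ 0) :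
    gaussianReal 0 v
      = MeasureTheory.volume.withDensity
          (fun x => ((gaussianPDFReal 0 v x).toNNReal : ENNReal)) :=
  gaussianReal_of_var_ne_zero 0 hv

lemma gaussian_sq_integrable (v : ℝ≥0) (hv : v ≠ 0) :
    Integrable (fun x : ℝ => x ^ 2) (gaussianReal 0 v) := by
  have hvpos : (0:ℝ) < (v:ℝ) := by
    have := hv; positivity
  have hb : (0:ℝ) < (2 * (v:ℝ))⁻¹ := by positivity
  rw [gaussianReal_eq_withDensity v hv,
    integrable_withDensity_iff_integrable_smul
      ((measurable_gaussianPDFReal 0 v).real_toNNReal)]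
  have : (fun x : ℝ => (gaussianPDFReal 0 v x).toNNReal • (x ^ 2))
      = fun x : ℝ => (Real.sqrt (2 * π * v))⁻¹ *
          (x ^ 2 * Real.exp (-(2 * (v:ℝ))⁻¹ * x ^ 2)) := by
    funext x; exact gaussianPDF_smul_sq v hv x
  rw [this]
  exact (integrable_sq_exp_neg_mul_sq' hb).const_mul _

lemma gaussian_integral_sq (v : ℝ≥0) (hv : v ≠ 0) :
    ∫ x, x ^ 2 ∂(gaussianReal 0 v) = v := by
  have hvpos : (0:ℝ) < (v:ℝ) := by
    have := hv; positivity
  have hb : (0:ℝ) < (2 * (v:ℝ))⁻¹ := by positivity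
  set t : ℝ := 2 * (v:ℝ) with hts
  have ht : (0:ℝ) < t := by positivity
  rw [gaussianReal_eq_withDensity v hv,
    integral_withDensity_eq_integral_smul
      ((measurable_gaussianPDFReal 0 v).real_toNNReal)]
  simp_rw [gaussianPDF_smul_sq v hv]
  rw [integral_const_mul, integral_sq_exp_neg_mul_sq' hb]
  have h3 : (t⁻¹ : ℝ) ^ (-(3:ℝ)/2) = t * Real.sqrt t := by
    rw [show (-(3:ℝ)/2) = -(1 + 1/2) by norm_num, Real.inv_rpow ht.le,
      Real.rpow_neg ht.le, inv_inv, Real.rpow_add ht, Real.rpow_one,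
      ← Real.sqrt_eq_rpow]
  have h4 : Real.sqrt (2 * π * v) = Real.sqrt π * Real.sqrt t := by
    rw [show 2*π*(v:ℝ) = π * t by rw [hts]; ring, Real.sqrt_mul Real.pi_pos.le]
  rw [h3, h4]
  have hπ : (0:ℝ) < Real.sqrt π := Real.sqrt_pos.mpr Real.pi_pos
  have hst : (0:ℝ) < Real.sqrt t := Real.sqrt_pos.mpr ht
  rw [mul_inv]
  have e : (Real.sqrt π)⁻¹ * (Real.sqrt t)⁻¹ *
      (Real.sqrt π / 2 * (t * Real.sqrt t))
      = ((Real.sqrt π)⁻¹ * Real.sqrt π) * ((Real.sqrt t)⁻¹ * Real.sqrt t) * (t/2) := by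
    ring
  rw [e, inv_mul_cancel₀ hπ.ne', inv_mul_cancel₀ hst.ne', one_mul, one_mul, hts]
  ring

lemma gaussian_integral_id (v : ℝ≥0) : ∫ x, x ∂(gaussianReal 0 v) = 0 := by
  have hone : (⟨(-1:ℝ)^2, sq_nonneg _⟩ : ℝ≥0) = 1 := by
    ext; norm_num
  have hmap : (gaussianReal 0 v).map (fun x => (-1:ℝ) * x) = gaussianReal 0 v := by
    have h := gaussianReal_map_const_mul (μ := 0) (v := v) (-1)
    rw [mul_zero] at h
    convert h using 2
    ext; simp
  have h1 : ∫ x, x ∂((gaussianReal 0 v).map (fun x => (-1:ℝ) * x))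
      = ∫ x, (-1:ℝ) * x ∂(gaussianReal 0 v) :=
    integral_map (by fun_prop) aestronglyMeasurable_id
  rw [hmap] at h1
  simp only [neg_one_mul] at h1
  rw [integral_neg] at h1
  linarith

lemma variance_of_map_gaussian {Ω : Type*} [MeasurableSpace Ω] (μ : Measure Ω)
    [IsProbabilityMeasure μ] {X : Ω → ℝ} (hXm : Measurable X) {v : ℝ≥0} (hv : v ≠ 0)
    (hmap : Measure.map X μ = gaussianReal 0 v) :
    MeasureTheory.MemLp X 2 μ ∧ variance X μ = v := by
  have hid : MeasureTheory.MemLp (id : ℝ → ℝ) 2 (gaussianReal 0 v) := by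
    rw [memLp_two_iff_integrable_sq aestronglyMeasurable_id]
    exact gaussian_sq_integrable v hv
  have hmem : MeasureTheory.MemLp X 2 μ := by
    have h := (memLp_map_measure_iff aestronglyMeasurable_id hXm.aemeasurable).mp
      (by rw [hmap]; exact hid)
    simpa [Function.comp] using h
  refine ⟨hmem, ?_⟩
  rw [variance_eq_sub hmem]
  have hE2 : ∫ y, y ^ 2 ∂(Measure.map X μ) = ∫ ω, X ω ^ 2 ∂μ :=
    integral_map hXm.aemeasurable ((measurable_id.pow_const 2).aestronglyMeasurable)
  have hE1 : ∫ y, y ∂(Measure.map X μ) = ∫ ω, X ω ∂μ :=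
    integral_map hXm.aemeasurable aestronglyMeasurable_id
  rw [hmap] at hE2 hE1
  rw [gaussian_integral_sq v hv] at hE2
  rw [gaussian_integral_id v] at hE1
  simp only [Pi.pow_apply]
  rw [← hE2, ← hE1]
  ring

/-- the variance of S_n(k) - s_{k,n}(S_n) for the inhomogeneous
Gaussian walk (n = 2m). -/
theorem stmt5 (σ1 σ2 : ℝ) (h1 : 0 < σ1) (h2 : 0 < σ2)
    {Ω : Type*} [MeasurableSpace Ω] (μ : Measure Ω) [IsProbabilityMeasure μ]
    (m : ℕ) (hm : 1 ≤ m)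
    (ξ : ℕ → Ω → ℝ) (hmeas : ∀ i, Measurable (ξ i))
    (hindep : iIndepFun ξ μ)
    (hX : ∀ i < m, Measure.map (ξ i) μ = gaussianReal 0 (Real.toNNReal (σ1^2)))
    (hY : ∀ i, m ≤ i → i < 2*m →
      Measure.map (ξ i) μ = gaussianReal 0 (Real.toNNReal (σ2^2))) :
    ∀ k ≤ 2*m,
      variance
        (fun ω => (∑ i ∈ Finset.range k, ξ i ω) -
          (if k ≤ m then σ1^2*(k:ℝ)/((σ1^2 + σ2^2)*m)
           else (σ1^2*(m:ℝ) + σ2^2*((k:ℝ) - m))/((σ1^2 + σ2^2)*m)) *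
          (∑ i ∈ Finset.range (2*m), ξ i ω)) μ
      = if k ≤ m then
          (k:ℝ)*σ1^2*((σ1^2 + σ2^2)*(2*(m:ℝ)) - 2*σ1^2*(k:ℝ))
            /((σ1^2 + σ2^2)*(2*(m:ℝ)))
        else
          (2*(m:ℝ) - (k:ℝ))*σ2^2*((σ1^2 + σ2^2)*(2*(m:ℝ)) - 2*σ2^2*(2*(m:ℝ) - (k:ℝ)))
            /((σ1^2 + σ2^2)*(2*(m:ℝ))) := by
  intro k hk
  have hξ : ∀ i < 2*m, MeasureTheory.MemLp (ξ i) 2 μ ∧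
      variance (ξ i) μ = (if i < m then σ1^2 else σ2^2) := by
    intro i hi
    by_cases him : i < m
    · have h := variance_of_map_gaussian μ (hmeas i)
        (v := Real.toNNReal (σ1^2))
        (by simp only [ne_eq, Real.toNNReal_eq_zero, not_le]; positivity)
        (hX i him)
      exact ⟨h.1, by rw [h.2, if_pos him, Real.coe_toNNReal _ (by positivity)]⟩
    · have h := variance_of_map_gaussian μ (hmeas i)
        (v := Real.toNNReal (σ2^2))
        (by simp only [ne_eq, Real.toNNReal_eq_zero, not_le]; positivity)
        (hY i (le_of_not_gt him) hi)
      exact ⟨h.1, by rw [h.2, if_neg him, Real.coe_toNNReal _ (by positivity)]⟩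
  set C : ℝ := (if k ≤ m then σ1^2*(k:ℝ)/((σ1^2 + σ2^2)*m)
           else (σ1^2*(m:ℝ) + σ2^2*((k:ℝ) - m))/((σ1^2 + σ2^2)*m)) with hC
  have hfun : (fun ω => (∑ i ∈ Finset.range k, ξ i ω) -
        C * (∑ i ∈ Finset.range (2*m), ξ i ω))
      = ∑ i ∈ Finset.range (2*m), ((if i < k then (1:ℝ) - C else -C) • ξ i) := by
    funext ω
    rw [Finset.sum_apply]
    simp only [Pi.smul_apply, smul_eq_mul]
    have hsplit : ∑ i ∈ Finset.range k, ξ i ω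
        = ∑ i ∈ Finset.range (2*m), (if i < k then ξ i ω else 0) := by
      rw [Finset.sum_congr rfl
        (fun i hi => (if_pos (Finset.mem_range.mp hi)).symm)]
      exact Finset.sum_subset (Finset.range_subset_range.mpr hk)
        (fun i _ hik => if_neg (fun h => hik (Finset.mem_range.mpr h)))
    have hterm : ∀ i, (if i < k then (1:ℝ) - C else -C) * ξ i ω
        = (if i < k then ξ i ω else 0) - C * ξ i ω := by
      intro i; split_ifs <;> ring
    rw [Finset.sum_congr rfl (fun i _ => hterm i), Finset.sum_sub_distrib,
      ← Finset.mul_sum, ← hsplit]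
  rw [hfun, IndepFun.variance_sum
    (fun i hi => ((hξ i (Finset.mem_range.mp hi)).1.const_smul _))
    (fun i _ j _ hij =>
      (hindep.indepFun hij).comp (measurable_const_smul _) (measurable_const_smul _))]
  have hvar : ∀ i ∈ Finset.range (2*m),
      variance ((if i < k then (1:ℝ) - C else -C) • ξ i) μ
      = (if i < k then (1:ℝ) - C else -C)^2 * (if i < m then σ1^2 else σ2^2) := by
    intro i hi
    rw [variance_smul, (hξ i (Finset.mem_range.mp hi)).2]
  rw [Finset.sum_congr rfl hvar]
  have hs : (0:ℝ) < σ1^2 + σ2^2 := by positivity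
  have hm0 : (0:ℝ) < (m:ℝ) := by exact_mod_cast hm
  by_cases hkm : k ≤ m
  · rw [if_pos hkm]
    have hCval : C = σ1^2*(k:ℝ)/((σ1^2 + σ2^2)*m) := by rw [hC, if_pos hkm]
    have hm2 : m ≤ 2*m := by omega
    rw [Finset.range_eq_Ico,
      ← Finset.sum_Ico_consecutive _ (Nat.zero_le m) hm2,
      ← Finset.sum_Ico_consecutive _ (Nat.zero_le k) hkm]
    rw [Finset.sum_congr rfl (fun i hi => by
      rw [Finset.mem_Ico] at hi
      rw [if_pos hi.2, if_pos (lt_of_lt_of_le hi.2 hkm)] :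
      ∀ i ∈ Finset.Ico 0 k, _ = ((1:ℝ)-C)^2 * σ1^2)]
    rw [Finset.sum_congr rfl (fun i hi => by
      rw [Finset.mem_Ico] at hi
      rw [if_neg (not_lt.mpr hi.1), if_pos hi.2] :
      ∀ i ∈ Finset.Ico k m, _ = (-C)^2 * σ1^2)]
    rw [Finset.sum_congr rfl (fun i hi => by
      rw [Finset.mem_Ico] at hi
      rw [if_neg (not_lt.mpr (le_trans hkm hi.1)), if_neg (not_lt.mpr hi.1)] :
      ∀ i ∈ Finset.Ico m (2*m), _ = (-C)^2 * σ2^2)]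
    simp only [Finset.sum_const, Nat.card_Ico, nsmul_eq_mul, Nat.sub_zero]
    rw [hCval]
    push_cast [Nat.cast_sub hkm, Nat.cast_sub hm2]
    field_simp
    ring
  · rw [if_neg hkm]
    push_neg at hkm
    have hmk : m ≤ k := le_of_lt hkm
    have hCval : C = (σ1^2*(m:ℝ) + σ2^2*((k:ℝ) - m))/((σ1^2 + σ2^2)*m) := by
      rw [hC, if_neg (not_le.mpr hkm)]
    rw [Finset.range_eq_Ico,
      ← Finset.sum_Ico_consecutive _ (Nat.zero_le k) hk,
      ← Finset.sum_Ico_consecutive _ (Nat.zero_le m) hmk]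
    rw [Finset.sum_congr rfl (fun i hi => by
      rw [Finset.mem_Ico] at hi
      rw [if_pos (lt_of_lt_of_le hi.2 hmk), if_pos hi.2] :
      ∀ i ∈ Finset.Ico 0 m, _ = ((1:ℝ)-C)^2 * σ1^2)]
    rw [Finset.sum_congr rfl (fun i hi => by
      rw [Finset.mem_Ico] at hi
      rw [if_pos hi.2, if_neg (not_lt.mpr hi.1)] :
      ∀ i ∈ Finset.Ico m k, _ = ((1:ℝ)-C)^2 * σ2^2)]
    rw [Finset.sum_congr rfl (fun i hi => by
      rw [Finset.mem_Ico] at hi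
      rw [if_neg (not_lt.mpr hi.1), if_neg (not_lt.mpr (le_trans hmk hi.1))] :
      ∀ i ∈ Finset.Ico k (2*m), _ = (-C)^2 * σ2^2)]
    simp only [Finset.sum_const, Nat.card_Ico, nsmul_eq_mul, Nat.sub_zero]
    rw [hCval]
    push_cast [Nat.cast_sub hmk, Nat.cast_sub hk]
    field_simp
    ring
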